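/- Let G be a signed graph and X ⊆ V(G) a vertex set such that the induced signed subgraph G[X] is chordal and contains no positive triangle. Then there exists W ⊆ X such that in the W-switch G_W every edge with both endpoints in X is negative. -/

import Mathlib

/-- Sign convention: `true` = positive edge, `false` = negative edge.
An edge `e` is *consistent* with the partition `(A, Aᶜ)` of the vertex set if it is
positive when both endpoints lie on the same side and negative otherwise. -/
def SignConsistent {V : Type*} (sign : Sym2 V → Bool) (A : Set V) (e : Sym2 V) : Prop :=
  ∀ u v : V, e = s(u, v) → (sign e = true ↔ (u ∈ A ↔ v ∈ A))

/-- The number of edges of the balanced subgraph induced by the partition `(A, Aᶜ)`. -/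
noncomputable def balCount {V : Type*} (G : SimpleGraph V) (sign : Sym2 V → Bool)
    (A : Set V) : ℕ :=
  {e | e ∈ G.edgeSet ∧ SignConsistent sign A e}.ncard

/-- `beta G sign` = β(G): the maximum number of edges of a balanced subgraph of the
signed graph `(G, sign)`. -/
noncomputable def beta {V : Type*} (G : SimpleGraph V) (sign : Sym2 V → Bool) : ℕ :=
  sSup {n | ∃ A : Set V, n = balCount G sign A}

/-- The Poljak–Turzík bound `pt G = m/2 + (n − t)/4`, where `m` is the number of edges,
`n` the number of vertices and `t` the number of connected components. -/
noncomputable def pt {V : Type*} (G : SimpleGraph V) : ℚ :=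
  (G.edgeSet.ncard : ℚ) / 2 +
    ((Nat.card V : ℚ) - (Nat.card G.ConnectedComponent : ℚ)) / 4

/-- β of the signed subgraph induced on the vertex set `U`. -/
noncomputable def betaOn {V : Type*} (G : SimpleGraph V) (sign : Sym2 V → Bool)
    (U : Set V) : ℕ :=
  beta (G.induce U) (fun e => sign (Sym2.map Subtype.val e))

/-- `pt` of the subgraph induced on the vertex set `U`. -/
noncomputable def ptOn {V : Type*} (G : SimpleGraph V) (U : Set V) : ℚ :=
  pt (G.induce U)

/-- The signed graph `(G, sign)` is balanced: some partition `(A, Aᶜ)` is consistent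
with every edge. -/
def IsBalanced {V : Type*} (G : SimpleGraph V) (sign : Sym2 V → Bool) : Prop :=
  ∃ A : Set V, ∀ u v : V, G.Adj u v → (sign s(u, v) = true ↔ (u ∈ A ↔ v ∈ A))

/-- `a`, `b`, `c` form a positive triangle: all three edges exist and the number of
negative edges among them is even. -/
def PositiveTriangle {V : Type*} (G : SimpleGraph V) (sign : Sym2 V → Bool)
    (a b c : V) : Prop :=
  G.Adj a b ∧ G.Adj b c ∧ G.Adj c a ∧
    Even ((if sign s(a, b) then 0 else 1) + (if sign s(b, c) then 0 else 1) +
      (if sign s(c, a) then 0 else 1))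

/-- `X` is (the vertex set of) a connected component of `G − S`. -/
def IsCompOf {V : Type*} (G : SimpleGraph V) (S X : Set V) : Prop :=
  Disjoint X S ∧ (G.induce X).Connected ∧
    ∀ x ∈ X, ∀ y : V, G.Adj x y → y ∉ S → y ∈ X

/-- The neighborhood of a vertex set `X`. -/
def nbhd {V : Type*} (G : SimpleGraph V) (X : Set V) : Set V :=
  {v | v ∉ X ∧ ∃ x ∈ X, G.Adj x v}

open Classical in
/-- The sign function of the `W`-switch `G_W`: the sign of every edge with exactly one
endpoint in `W` is flipped. -/
noncomputable def switchSign {V : Type*} (sign : Sym2 V → Bool) (W : Set V) :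
    Sym2 V → Bool :=
  fun e => if ∃ u v : V, e = s(u, v) ∧ u ∈ W ∧ v ∉ W then !sign e else sign e


namespace Stmt4Aux

open SimpleGraph

variable {V : Type*} {G : SimpleGraph V}

lemma edge_mem_of_length_one {a b : V} (p : G.Walk a b) (hp : p.length = 1) :
    s(a, b) ∈ p.edges := by
  cases p with
  | nil => simp at hp
  | cons h' p' =>
    cases p' with
    | nil => simp
    | cons h'' p'' => simp [SimpleGraph.Walk.length_cons] at hp

lemma path_edge_end {v u : V} (r : G.Walk v u) (hp : r.IsPath) (hne : u ≠ v)
    (he : s(u, v) ∈ r.edges) : r.length = 1 := by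
  cases r with
  | nil => simp at he
  | cons h' r' =>
    rename_i c
    rw [SimpleGraph.Walk.edges_cons, List.mem_cons] at he
    rcases he with he | he
    · rw [Sym2.eq_iff] at he
      rcases he with ⟨rfl, rfl⟩ | ⟨rfl, -⟩
      · exact absurd rfl hne
      · have hnil : r' = SimpleGraph.Walk.nil :=
          (SimpleGraph.Walk.isPath_iff_eq_nil (p := r')).mp hp.of_cons
        subst hnil
        simp
    · have hvs : v ∈ r'.support := SimpleGraph.Walk.snd_mem_support_of_mem_edges r' he
      have := (SimpleGraph.Walk.cons_isPath_iff h' r').mp hp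
      exact absurd hvs this.2


lemma even_closed (sign : Sym2 V → Bool) (X : Set V)
    (hchordal : ∀ (u : V) (w : G.Walk u u), w.IsCycle → (∀ x ∈ w.support, x ∈ X) →
      4 ≤ w.length →
      ∃ a b : V, a ∈ w.support ∧ b ∈ w.support ∧ G.Adj a b ∧ s(a, b) ∉ w.edges)
    (htri : ¬ ∃ a b c : V, a ∈ X ∧ b ∈ X ∧ c ∈ X ∧ PositiveTriangle G sign a b c) :
    ∀ (n : ℕ) (u : V) (w : G.Walk u u), w.length ≤ n → (∀ x ∈ w.support, x ∈ X) →
      Even (w.edges.countP sign) := by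
  classical
  intro n
  induction n using Nat.strong_induction_on with
  | _ n IH =>
  intro u w hlen hsupp
  cases w with
  | nil => simp
  | cons h r =>
  rename_i v
  by_cases hnd : r.support.Nodup
  · -- tail of the support has no duplicates
    have hpath : r.IsPath := SimpleGraph.Walk.IsPath.mk' hnd
    by_cases he : s(u, v) ∈ r.edges
    · -- the walk has length 2
      have hl1 : r.length = 1 := path_edge_end r hpath h.ne he
      cases r with
      | nil => simp at hl1
      | cons h' r' =>
        cases r' with
        | nil =>
          have hsw : s(v, u) = s(u, v) := Sym2.eq_swap
          simp only [SimpleGraph.Walk.edges_cons, SimpleGraph.Walk.edges_nil,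
            List.countP_cons, List.countP_nil, hsw]
          cases hs : sign s(u, v) <;> simp [hs]
        | cons _ _ => simp [SimpleGraph.Walk.length_cons] at hl1
    · -- the walk is a cycle
      have hcyc : (SimpleGraph.Walk.cons h r).IsCycle :=
        (SimpleGraph.Walk.cons_isCycle_iff r h).mpr ⟨hpath, he⟩
      cases r with
      | nil => exact absurd h (G.loopless.irrefl u)
      | cons h2 r2 =>
      rename_i z
      cases r2 with
      | nil => exact absurd (by simp [Sym2.eq_swap]) he
      | cons h3 r3 =>
      rename_i z2
      cases r3 with
      | nil =>
        -- triangle u → v → z → u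
        have hux : u ∈ X := hsupp u (by simp)
        have hvx : v ∈ X := hsupp v (by simp)
        have hzx : z ∈ X := hsupp z (by simp)
        have hPT : ¬ PositiveTriangle G sign u v z := fun hP =>
          htri ⟨u, v, z, hux, hvx, hzx, hP⟩
        have hOdd : ¬ Even ((if sign s(u, v) then 0 else 1) +
            (if sign s(v, z) then 0 else 1) + (if sign s(z, u) then 0 else 1)) :=
          fun hE => hPT ⟨h, h2, h3, hE⟩
        simp only [SimpleGraph.Walk.edges_cons, SimpleGraph.Walk.edges_nil,
          List.countP_cons, List.countP_nil]
        cases hs1 : sign s(u, v) <;> cases hs2 : sign s(v, z) <;>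
          cases hs3 : sign s(z, u) <;>
          simp only [hs1, hs2, hs3, if_true, if_false] at hOdd ⊢ <;>
          revert hOdd <;> decide
      | cons h4 r4 =>
        -- length ≥ 4, chord argument
        set w : G.Walk u u := SimpleGraph.Walk.cons h (SimpleGraph.Walk.cons h2
          (SimpleGraph.Walk.cons h3 (SimpleGraph.Walk.cons h4 r4))) with hwdef
        have hlen4 : 4 ≤ w.length := by
          simp [hwdef, SimpleGraph.Walk.length_cons]
        obtain ⟨a, b, ha, hb, hab, hnotmem⟩ := hchordal u w hcyc hsupp hlen4
        obtain ⟨w1, hw1⟩ : ∃ w1 : G.Walk a a, w.rotate a ha = w1 := ⟨_, rfl⟩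
        have hperm : List.Perm w1.edges w.edges := (hw1 ▸ w.rotate_edges a ha).perm
        have htperm : List.Perm w1.support.tail w.support.tail :=
          (hw1 ▸ w.support_rotate a ha).perm
        have hlen1 : w1.length = w.length := by
          rw [← SimpleGraph.Walk.length_edges, ← SimpleGraph.Walk.length_edges]
          exact hperm.length_eq
        have hsupp1 : ∀ x ∈ w1.support, x ∈ X := by
          intro x hx
          rcases (SimpleGraph.Walk.mem_support_iff _).mp hx with rfl | hx'
          · exact hsupp x ha
          · exact hsupp x (List.mem_of_mem_tail (htperm.mem_iff.mp hx'))
        have hend : u ∈ w.support.tail := by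
          rw [hwdef]
          simp only [SimpleGraph.Walk.support_cons, List.tail_cons]
          exact List.mem_cons_of_mem _ (List.mem_cons_of_mem _
            (List.mem_cons_of_mem _ (SimpleGraph.Walk.end_mem_support _)))
        have hb1 : b ∈ w1.support := by
          rcases (SimpleGraph.Walk.mem_support_iff _).mp hb with rfl | hb'
          · exact (SimpleGraph.Walk.mem_support_iff _).mpr
              (Or.inr (htperm.mem_iff.mpr hend))
          · exact (SimpleGraph.Walk.mem_support_iff _).mpr
              (Or.inr (htperm.mem_iff.mpr hb'))
        obtain ⟨p, hp⟩ : ∃ p, w1.takeUntil b hb1 = p := ⟨_, rfl⟩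
        obtain ⟨q, hq⟩ : ∃ q, w1.dropUntil b hb1 = q := ⟨_, rfl⟩
        have hspec : p.append q = w1 := by
          rw [← hp, ← hq]; exact w1.take_spec hb1
        have hplen : p.length + q.length = w.length := by
          rw [← hlen1, ← hspec, SimpleGraph.Walk.length_append]
        have hpe : p.edges ++ q.edges = w1.edges := by
          rw [← SimpleGraph.Walk.edges_append, hspec]
        have hswap : s(b, a) = s(a, b) := Sym2.eq_swap
        have hp2 : 2 ≤ p.length := by
          have h0 : p.length ≠ 0 := fun h0 =>
            hab.ne (SimpleGraph.Walk.eq_of_length_eq_zero h0)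
          have h1 : p.length ≠ 1 := by
            intro h1
            have hm : s(a, b) ∈ w1.edges := by
              rw [← hpe]; exact List.mem_append_left _ (edge_mem_of_length_one p h1)
            exact hnotmem (hperm.mem_iff.mp hm)
          omega
        have hq2 : 2 ≤ q.length := by
          have h0 : q.length ≠ 0 := fun h0 =>
            hab.ne (SimpleGraph.Walk.eq_of_length_eq_zero h0).symm
          have h1 : q.length ≠ 1 := by
            intro h1
            have hm : s(a, b) ∈ w1.edges := by
              rw [← hpe]
              exact List.mem_append_right _ (hswap ▸ edge_mem_of_length_one q h1)
            exact hnotmem (hperm.mem_iff.mp hm)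
          omega
        have hpX : ∀ x ∈ p.support, x ∈ X := fun x hx =>
          hsupp1 x (by rw [← hp] at hx; exact SimpleGraph.Walk.support_takeUntil_subset _ _ hx)
        have hqX : ∀ x ∈ q.support, x ∈ X := fun x hx =>
          hsupp1 x (by rw [← hq] at hx; exact SimpleGraph.Walk.support_dropUntil_subset _ _ hx)
        have haX : a ∈ X := hsupp a ha
        obtain ⟨k1, hk1⟩ := IH (n - 1) (by omega) a
          (p.append (SimpleGraph.Walk.cons hab.symm SimpleGraph.Walk.nil))
          (by rw [SimpleGraph.Walk.length_append]; simp; omega)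
          (by
            intro x hx
            rw [SimpleGraph.Walk.support_append] at hx
            rcases List.mem_append.mp hx with hx | hx
            · exact hpX x hx
            · simp at hx; subst hx; exact haX)
        obtain ⟨k2, hk2⟩ := IH (n - 1) (by omega) a
          (SimpleGraph.Walk.cons hab q)
          (by rw [SimpleGraph.Walk.length_cons]; omega)
          (by
            intro x hx
            rw [SimpleGraph.Walk.support_cons] at hx
            rcases List.mem_cons.mp hx with rfl | hx
            · exact haX
            · exact hqX x hx)
        have hsum : w.edges.countP sign = p.edges.countP sign + q.edges.countP sign := by
          rw [← hperm.countP_eq, ← hpe, List.countP_append]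
        rw [SimpleGraph.Walk.edges_append, List.countP_append] at hk1
        simp only [SimpleGraph.Walk.edges_cons, SimpleGraph.Walk.edges_nil,
          List.countP_cons, List.countP_nil, hswap] at hk1 hk2
        rw [Nat.even_iff]
        cases hsab : sign s(a, b) <;> simp only [hsab, if_true, if_false] at hk1 hk2 <;>
          omega
  · -- duplicate vertex in the tail of the support
    obtain ⟨x, hxdup⟩ := List.exists_duplicate_iff_not_nodup.mpr hnd
    have hxcount : 2 ≤ r.support.count x := List.duplicate_iff_two_le_count.mp hxdup
    have hxmem : x ∈ r.support := hxdup.mem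
    have hxw : x ∈ (SimpleGraph.Walk.cons h r).support := by
      rw [SimpleGraph.Walk.support_cons]; exact List.mem_cons_of_mem _ hxmem
    obtain ⟨w1, hw1⟩ : ∃ w1 : G.Walk x x, (SimpleGraph.Walk.cons h r).rotate x hxw = w1 :=
      ⟨_, rfl⟩
    have hperm : List.Perm w1.edges (SimpleGraph.Walk.cons h r).edges :=
      (hw1 ▸ SimpleGraph.Walk.rotate_edges _ x hxw).perm
    have htperm : List.Perm w1.support.tail (SimpleGraph.Walk.cons h r).support.tail :=
      (hw1 ▸ SimpleGraph.Walk.support_rotate _ x hxw).perm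
    have hlen1 : w1.length = r.length + 1 := by
      rw [← SimpleGraph.Walk.length_edges]
      rw [hperm.length_eq, SimpleGraph.Walk.length_edges, SimpleGraph.Walk.length_cons]
    have hsupp1 : ∀ y ∈ w1.support, y ∈ X := by
      intro y hy
      rcases (SimpleGraph.Walk.mem_support_iff _).mp hy with rfl | hy'
      · exact hsupp y hxw
      · exact hsupp y (List.mem_of_mem_tail (htperm.mem_iff.mp hy'))
    cases w1 with
    | nil => simp at hlen1
    | cons h2 r2 =>
      rename_i y
      have hcnt2 : 2 ≤ r2.support.count x := by
        have := htperm.count_eq x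
        simp only [SimpleGraph.Walk.support_cons, List.tail_cons] at this
        omega
      have hxr2 : x ∈ r2.support := by
        have : 0 < r2.support.count x := by omega
        exact List.count_pos_iff.mp this
      obtain ⟨p, hp⟩ : ∃ p, r2.takeUntil x hxr2 = p := ⟨_, rfl⟩
      obtain ⟨q, hq⟩ : ∃ q, r2.dropUntil x hxr2 = q := ⟨_, rfl⟩
      have hspec : p.append q = r2 := by
        rw [← hp, ← hq]; exact r2.take_spec hxr2
      have hcp : p.support.count x = 1 := by
        rw [← hp]; exact r2.count_support_takeUntil_eq_one hxr2
      have hsuppsplit : r2.support = p.support ++ q.support.tail := by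
        rw [← hspec, SimpleGraph.Walk.support_append]
      have hq1 : 1 ≤ q.length := by
        have hcq : 1 ≤ q.support.tail.count x := by
          rw [hsuppsplit, List.count_append] at hcnt2; omega
        have h1 := List.count_le_length (a := x) (l := q.support.tail)
        have h2 : q.support.tail.length = q.length := by
          have := SimpleGraph.Walk.length_support q
          cases hqs : q.support with
          | nil => exact absurd hqs q.support_ne_nil
          | cons a l => rw [hqs] at this; simp at this ⊢; omega
        omega
      have hplen : p.length + q.length = r2.length := by
        rw [← hspec, SimpleGraph.Walk.length_append]
      have hr2len : r2.length = r.length := by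
        rw [SimpleGraph.Walk.length_cons] at hlen1; omega
      rw [SimpleGraph.Walk.length_cons] at hlen
      have hpX : ∀ z ∈ p.support, z ∈ X := fun z hz =>
        hsupp1 z (by
          rw [SimpleGraph.Walk.support_cons]
          refine List.mem_cons_of_mem _ ?_
          rw [← hp] at hz; exact SimpleGraph.Walk.support_takeUntil_subset _ _ hz)
      have hqX : ∀ z ∈ q.support, z ∈ X := fun z hz =>
        hsupp1 z (by
          rw [SimpleGraph.Walk.support_cons]
          refine List.mem_cons_of_mem _ ?_
          rw [← hq] at hz; exact SimpleGraph.Walk.support_dropUntil_subset _ _ hz)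
      obtain ⟨k1, hk1⟩ := IH (n - 1) (by omega) x (SimpleGraph.Walk.cons h2 p)
        (by rw [SimpleGraph.Walk.length_cons]; omega)
        (by
          intro z hz
          rw [SimpleGraph.Walk.support_cons] at hz
          rcases List.mem_cons.mp hz with rfl | hz
          · exact hsupp1 z (SimpleGraph.Walk.start_mem_support _)
          · exact hpX z hz)
      obtain ⟨k2, hk2⟩ := IH (n - 1) (by omega) x q (by omega) hqX
      have hsum : (SimpleGraph.Walk.cons h r).edges.countP sign =
          (if sign s(x, y) then 1 else 0) + (p.edges.countP sign + q.edges.countP sign) := by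
        rw [← hperm.countP_eq]
        simp only [SimpleGraph.Walk.edges_cons, List.countP_cons]
        rw [← hspec, SimpleGraph.Walk.edges_append, List.countP_append]
        cases hsxy : sign s(x, y) <;> simp [hsxy] <;> omega
      simp only [SimpleGraph.Walk.edges_cons, List.countP_cons] at hk1
      rw [Nat.even_iff]
      cases hsxy : sign s(x, y) <;>
        simp only [hsxy, if_true, if_false] at hsum hk1 <;> omega


end Stmt4Aux

/-- If `X ⊆ V(G)` induces a chordal signed subgraph with no positive
triangle, then there is `W ⊆ X` such that in the `W`-switch `G_W` every edge with both
endpoints in `X` is negative. -/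
theorem stmt4 {V : Type*} [Fintype V] (G : SimpleGraph V) (sign : Sym2 V → Bool)
    (X : Set V)
    (hchordal : ∀ (u : V) (w : G.Walk u u), w.IsCycle → (∀ x ∈ w.support, x ∈ X) →
      4 ≤ w.length →
      ∃ a b : V, a ∈ w.support ∧ b ∈ w.support ∧ G.Adj a b ∧ s(a, b) ∉ w.edges)
    (htri : ¬ ∃ a b c : V, a ∈ X ∧ b ∈ X ∧ c ∈ X ∧ PositiveTriangle G sign a b c) :
    ∃ W ⊆ X, ∀ u v : V, u ∈ X → v ∈ X → G.Adj u v →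
      switchSign sign W s(u, v) = false := by
  classical
  have key := Stmt4Aux.even_closed (G := G) sign X hchordal htri
  set Rel : V → V → Prop :=
    fun a b => a = b ∨ ∃ w : G.Walk a b, ∀ x ∈ w.support, x ∈ X with hRelDef
  have hequiv : Equivalence Rel := by
    constructor
    · intro a; exact Or.inl rfl
    · rintro a b (rfl | ⟨w, hw⟩)
      · exact Or.inl rfl
      · refine Or.inr ⟨w.reverse, ?_⟩
        intro x hx
        rw [SimpleGraph.Walk.support_reverse, List.mem_reverse] at hx
        exact hw x hx
    · rintro a b c (rfl | ⟨w1, hw1⟩) hbc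
      · exact hbc
      · rcases hbc with rfl | ⟨w2, hw2⟩
        · exact Or.inr ⟨w1, hw1⟩
        · refine Or.inr ⟨w1.append w2, ?_⟩
          intro x hx
          rw [SimpleGraph.Walk.support_append] at hx
          rcases List.mem_append.mp hx with hx | hx
          · exact hw1 x hx
          · exact hw2 x (List.mem_of_mem_tail hx)
  obtain ⟨base, hbrel, hbeq⟩ : ∃ base : V → V, (∀ v, Rel (base v) v) ∧
      ∀ a b : V, Rel a b → base a = base b := by
    let s : Setoid V := ⟨Rel, hequiv⟩
    exact ⟨fun v => (@Quotient.mk V s v).out,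
      fun v => @Quotient.mk_out V s v,
      fun a b h => congrArg Quotient.out (@Quotient.sound V s a b h)⟩
  have parity_unique : ∀ (a b : V) (w1 w2 : G.Walk a b),
      (∀ x ∈ w1.support, x ∈ X) → (∀ x ∈ w2.support, x ∈ X) →
      w1.edges.countP sign % 2 = w2.edges.countP sign % 2 := by
    intro a b w1 w2 h1 h2
    have hcl := key (w1.append w2.reverse).length a (w1.append w2.reverse) le_rfl (by
      intro x hx
      rw [SimpleGraph.Walk.support_append] at hx
      rcases List.mem_append.mp hx with hx | hx
      · exact h1 x hx
      · have hx' := List.mem_of_mem_tail hx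
        rw [SimpleGraph.Walk.support_reverse, List.mem_reverse] at hx'
        exact h2 x hx')
    rw [SimpleGraph.Walk.edges_append, List.countP_append,
      SimpleGraph.Walk.edges_reverse] at hcl
    have hrev : w2.edges.reverse.countP sign = w2.edges.countP sign :=
      (List.reverse_perm w2.edges).countP_eq _
    rw [hrev] at hcl
    obtain ⟨k, hk⟩ := hcl
    omega
  set W : Set V := {v | v ∈ X ∧ ∃ w : G.Walk (base v) v,
    (∀ x ∈ w.support, x ∈ X) ∧ w.edges.countP sign % 2 = 1} with hWdef
  have hWmem : ∀ t : V, t ∈ W ↔ (t ∈ X ∧ ∃ w : G.Walk (base t) t,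
      (∀ x ∈ w.support, x ∈ X) ∧ w.edges.countP sign % 2 = 1) := fun t => Iff.rfl
  refine ⟨W, fun v hv => ((hWmem v).mp hv).1, ?_⟩
  intro u v hu hv huv
  have hbuv : base u = base v := hbeq u v (Or.inr
    ⟨SimpleGraph.Walk.cons huv SimpleGraph.Walk.nil, by
      intro x hx
      simp only [SimpleGraph.Walk.support_cons, SimpleGraph.Walk.support_nil] at hx
      rcases List.mem_cons.mp hx with rfl | hx
      · exact hu
      · rcases List.mem_singleton.mp hx with rfl
        exact hv⟩)
  obtain ⟨wu, hwuX⟩ : ∃ w : G.Walk (base u) u, ∀ x ∈ w.support, x ∈ X := by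
    rcases hbrel u with hb | ⟨w, hw⟩
    · refine ⟨SimpleGraph.Walk.nil.copy hb.symm rfl, ?_⟩
      intro x hx
      rw [SimpleGraph.Walk.support_copy] at hx
      simp only [SimpleGraph.Walk.support_nil, List.mem_singleton] at hx
      subst hx; exact hu
    · exact ⟨w, hw⟩
  obtain ⟨wv, hwvX, hwvcnt⟩ : ∃ w : G.Walk (base v) v, (∀ x ∈ w.support, x ∈ X) ∧
      w.edges.countP sign = wu.edges.countP sign + (if sign s(u, v) then 1 else 0) := by
    refine ⟨(wu.append (SimpleGraph.Walk.cons huv SimpleGraph.Walk.nil)).copy hbuv rfl,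
      ?_, ?_⟩
    · intro x hx
      rw [SimpleGraph.Walk.support_copy, SimpleGraph.Walk.support_append] at hx
      rcases List.mem_append.mp hx with hx | hx
      · exact hwuX x hx
      · simp only [SimpleGraph.Walk.support_cons, SimpleGraph.Walk.support_nil,
          List.tail_cons, List.mem_singleton] at hx
        subst hx; exact hv
    · rw [SimpleGraph.Walk.edges_copy, SimpleGraph.Walk.edges_append, List.countP_append]
      simp [List.countP_cons]
  have humem : u ∈ W ↔ wu.edges.countP sign % 2 = 1 := by
    rw [hWmem u]
    constructor
    · rintro ⟨-, w', hw', hodd⟩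
      rw [← parity_unique _ _ w' wu hw' hwuX]; exact hodd
    · intro hodd; exact ⟨hu, wu, hwuX, hodd⟩
  have hvmem : v ∈ W ↔ (wu.edges.countP sign + (if sign s(u, v) then 1 else 0)) % 2 = 1 := by
    rw [hWmem v]
    constructor
    · rintro ⟨-, w', hw', hodd⟩
      rw [← hwvcnt, ← parity_unique _ _ w' wv hw' hwvX]; exact hodd
    · intro hodd; exact ⟨hv, wv, hwvX, by rw [hwvcnt]; exact hodd⟩
  by_cases hs : sign s(u, v) = true
  · simp only [hs, if_true] at hvmem
    have hcond : ∃ a b : V, s(u, v) = s(a, b) ∧ a ∈ W ∧ b ∉ W := by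
      by_cases hcu : wu.edges.countP sign % 2 = 1
      · exact ⟨u, v, rfl, humem.mpr hcu, fun hmem => by
          have := hvmem.mp hmem; omega⟩
      · refine ⟨v, u, Sym2.eq_swap, hvmem.mpr (by omega), fun hmem => hcu (humem.mp hmem)⟩
    simp only [switchSign]
    rw [if_pos hcond, hs]
    rfl
  · rw [Bool.not_eq_true] at hs
    simp only [hs, Bool.false_eq_true, if_false, Nat.add_zero] at hvmem
    have hncond : ¬ ∃ a b : V, s(u, v) = s(a, b) ∧ a ∈ W ∧ b ∉ W := by
      rintro ⟨a, b, heq, haW, hbW⟩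
      rcases Sym2.eq_iff.mp heq with ⟨rfl, rfl⟩ | ⟨rfl, rfl⟩
      · exact hbW (hvmem.mpr (humem.mp haW))
      · exact hbW (humem.mpr (hvmem.mp haW))
    simp only [switchSign]
    rw [if_neg hncond]
    exact hs
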